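/- If G is a graph with exactly k isolated vertices, then B(G) ≤ Z(L(G)) + k. -/

import Mathlib

open scoped BigOperators

namespace Paper

variable {V : Type*}

/-- The zero-forcing closure: vertices that eventually become black starting from `S`. -/
inductive ZFClosure (G : SimpleGraph V) (S : Set V) : V → Prop
  | init {v : V} : v ∈ S → ZFClosure G S v
  | force {v w : V} : ZFClosure G S v → G.Adj v w →
      (∀ u, G.Adj v u → u ≠ w → ZFClosure G S u) → ZFClosure G S w

/-- `S` is a zero-forcing set of `G`. -/
def IsZeroForcingSet (G : SimpleGraph V) (S : Set V) : Prop :=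
  ∀ v : V, ZFClosure G S v

/-- The zero-forcing number `Z(G)`. -/
noncomputable def zfNumber (G : SimpleGraph V) : ℕ :=
  sInf {n | ∃ S : Set V, IsZeroForcingSet G S ∧ S.ncard = n}

/-- A state of the brushing process: the set of vertices that have fired (and hence
are clean), the set of dirty edges, and the number of brushes at each vertex. -/
structure BrushConfig (V : Type*) where
  fired : Set V
  dirty : Set (Sym2 V)
  brushes : V → ℕ

open Classical in
def BrushStep (G : SimpleGraph V) (restricted : Bool) (c c' : BrushConfig V) : Prop :=
  ∃ (v : V) (f : Sym2 V → ℕ),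
    v ∉ c.fired ∧
    (∀ e ∈ c.dirty, v ∈ e → if restricted then f e = 1 else 1 ≤ f e) ∧
    (∑ᶠ e ∈ {e ∈ c.dirty | v ∈ e}, f e) ≤ c.brushes v ∧
    c'.fired = insert v c.fired ∧
    c'.dirty = {e ∈ c.dirty | v ∉ e} ∧
    ∀ w : V, c'.brushes w =
      (if w = v then 0 else c.brushes w) + c.dirty.indicator f s(v, w)

/-- The initial brush configuration `ω` cleans the graph `G`:  starting with every vertex
and every edge dirty, some sequence of firings results in every vertex having fired. -/
def Cleans (G : SimpleGraph V) (restricted : Bool) (ω : V → ℕ) : Prop :=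
  ∃ c : BrushConfig V,
    Relation.ReflTransGen (BrushStep G restricted) ⟨∅, G.edgeSet, ω⟩ c ∧
    c.fired = Set.univ

/-- The brushing number `B(G)` (several brushes may traverse a single edge). -/
noncomputable def brushNumber (G : SimpleGraph V) : ℕ :=
  sInf {n | ∃ ω : V → ℕ, Cleans G false ω ∧ ∑ᶠ v, ω v = n}

/-- The restricted brushing number `b(G)` (each edge is traversed by exactly one brush). -/
noncomputable def brushNumber' (G : SimpleGraph V) : ℕ :=
  sInf {n | ∃ ω : V → ℕ, Cleans G true ω ∧ ∑ᶠ v, ω v = n}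


-- ===================== auxiliary development =====================
section Gen

open scoped Classical

variable [Fintype V] (G : SimpleGraph V)

/-- dirty edges when the set of fired vertices is `A`. -/
def dirtySet (A : Set V) : Set (Sym2 V) := {e ∈ G.edgeSet | ∀ v ∈ e, v ∉ A}

/-- brush counts when the set of fired vertices is `A`. -/
noncomputable def beta (ω : V → ℕ) (A : Set V) (w : V) : ℕ :=
  if w ∈ A then 0 else ω w + {u ∈ A | G.Adj w u}.ncard

noncomputable def conf (ω : V → ℕ) (A : Set V) : BrushConfig V :=
  ⟨A, dirtySet G A, beta G ω A⟩

lemma conf_cleans (κ : V → ℕ) (hκ : Function.Injective κ) (ω : V → ℕ)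
    (hω : ∀ v, {w | G.Adj v w ∧ κ v < κ w}.ncard ≤ ω v + {w | G.Adj v w ∧ κ w < κ v}.ncard) :
    ∀ (n : ℕ) (A : Set V), (∀ u w, u ∈ A → κ w < κ u → w ∈ A) → Aᶜ.ncard ≤ n →
    ∃ c', Relation.ReflTransGen (BrushStep G false) (conf G ω A) c' ∧ c'.fired = Set.univ := by
  intro n
  induction n with
  | zero =>
    intro A _ hcard
    have hA : A = Set.univ := by
      have : Aᶜ = ∅ := by
        rw [← Set.ncard_eq_zero (Set.toFinite _)]; omega
      simpa [Set.compl_empty_iff] using this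
    exact ⟨conf G ω A, .refl, by simp [conf, hA]⟩
  | succ n ih =>
    intro A hA hcard
    by_cases hAu : A = Set.univ
    · exact ⟨conf G ω A, .refl, by simp [conf, hAu]⟩
    · have hne : Aᶜ.Nonempty := by
        rw [Set.nonempty_compl]; exact hAu
      obtain ⟨v, hvA, hmin⟩ := Set.exists_min_image Aᶜ κ (Set.toFinite _) hne
      -- key fact : for w ≠ v, w ∉ A ↔ κ v < κ w
      have hout : ∀ w, w ≠ v → (w ∉ A ↔ κ v < κ w) := by
        intro w hwv
        constructor
        · intro hw
          rcases lt_or_eq_of_le (hmin w hw) with h | h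
          · exact h
          · exact absurd (hκ h) (Ne.symm hwv)
        · intro hlt hw
          exact hvA (hA w v hw hlt)
      have hstep : BrushStep G false (conf G ω A) (conf G ω (insert v A)) := by
        refine ⟨v, fun _ => 1, hvA, ?_, ?_, rfl, ?_, ?_⟩
        · intro e _ _; simp
        · -- budget
          have hset : {e ∈ (conf G ω A).dirty | v ∈ e}
              = (fun w => s(v, w)) '' {w | G.Adj v w ∧ κ v < κ w} := by
            ext e
            simp only [conf, dirtySet, Set.mem_setOf_eq, Set.mem_image]
            constructor
            · rintro ⟨⟨he, hend⟩, hv⟩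
              obtain ⟨w, rfl⟩ := Sym2.mem_iff_exists.mp hv
              have hadj : G.Adj v w := G.mem_edgeSet.mp he
              refine ⟨w, ⟨hadj, ?_⟩, rfl⟩
              exact (hout w (G.ne_of_adj hadj).symm).mp (hend w (Sym2.mem_mk_right v w))
            · rintro ⟨w, ⟨hadj, hκw⟩, rfl⟩
              have hwv : w ≠ v := (G.ne_of_adj hadj).symm
              refine ⟨⟨G.mem_edgeSet.mpr hadj, ?_⟩, Sym2.mem_mk_left v w⟩
              intro x hx
              rcases Sym2.mem_iff.mp hx with rfl | rfl
              · exact hvA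
              · exact (hout x hwv).mpr hκw
          have hinj : Function.Injective (fun w => s(v, w)) := by
            intro a b h; exact Sym2.congr_right.mp h
          have hfin : ((fun w => s(v, w)) '' {w | G.Adj v w ∧ κ v < κ w}).Finite :=
            Set.toFinite _
          have hsum : ∑ᶠ e ∈ {e ∈ (conf G ω A).dirty | v ∈ e}, (fun _ => (1:ℕ)) e
              = {w | G.Adj v w ∧ κ v < κ w}.ncard := by
            rw [hset, finsum_mem_eq_finite_toFinset_sum _ hfin, Finset.sum_const, smul_eq_mul,
              mul_one, ← Set.ncard_eq_toFinset_card _ hfin,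
              Set.ncard_image_of_injective _ hinj]
          rw [hsum]
          have hbeta : (conf G ω A).brushes v
              = ω v + {w | G.Adj v w ∧ κ w < κ v}.ncard := by
            have hDm : {u ∈ A | G.Adj v u} = {w | G.Adj v w ∧ κ w < κ v} := by
              ext u
              simp only [Set.mem_setOf_eq]
              constructor
              · intro ⟨huA, hadj⟩
                refine ⟨hadj, ?_⟩
                by_contra hnot
                push_neg at hnot
                rcases lt_or_eq_of_le hnot with h | h
                · exact hvA (hA u v huA h)
                · exact (G.ne_of_adj hadj).symm (hκ h.symm)
              · intro ⟨hadj, hκu⟩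
                have : u ∈ A := by
                  by_contra hu
                  have := (hout u (G.ne_of_adj hadj).symm).mp hu
                  omega
                exact ⟨this, hadj⟩
            show beta G ω A v = _
            rw [beta, if_neg hvA, hDm]
          rw [hbeta]
          exact hω v
        · -- dirty update
          show dirtySet G (insert v A) = {e ∈ dirtySet G A | v ∉ e}
          ext e
          simp only [dirtySet, Set.mem_setOf_eq, Set.mem_insert_iff]
          constructor
          · rintro ⟨he, hend⟩
            refine ⟨⟨he, fun x hx => fun hxA => (hend x hx) (Or.inr hxA)⟩, ?_⟩
            intro hv
            exact (hend v hv) (Or.inl rfl)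
          · rintro ⟨⟨he, hend⟩, hv⟩
            refine ⟨he, fun x hx => ?_⟩
            rintro (rfl | hxA)
            · exact hv hx
            · exact hend x hx hxA
        · -- brushes update
          intro w
          show beta G ω (insert v A) w
            = (if w = v then 0 else beta G ω A w) + (dirtySet G A).indicator (fun _ => 1) s(v, w)
          rcases eq_or_ne w v with rfl | hwv
          · rw [if_pos rfl, beta, if_pos (Set.mem_insert _ _)]
            have : s(w, w) ∉ dirtySet G A := by
              intro h
              exact (G.irrefl) (G.mem_edgeSet.mp h.1)
            rw [Set.indicator_of_notMem this]
            simp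
          · rw [if_neg hwv]
            by_cases hwA : w ∈ A
            · rw [beta, if_pos (Set.mem_insert_of_mem _ hwA), beta, if_pos hwA]
              have : s(v, w) ∉ dirtySet G A := by
                intro h
                exact h.2 w (Sym2.mem_mk_right v w) hwA
              rw [Set.indicator_of_notMem this]
              simp
            · have hwA' : w ∉ insert v A := by
                simp [Set.mem_insert_iff, hwv, hwA]
              rw [beta, if_neg hwA', beta, if_neg hwA]
              by_cases hadj : G.Adj v w
              · have hmem : s(v, w) ∈ dirtySet G A := by
                  refine ⟨G.mem_edgeSet.mpr hadj, fun x hx => ?_⟩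
                  rcases Sym2.mem_iff.mp hx with rfl | rfl
                  · exact hvA
                  · exact hwA
                rw [Set.indicator_of_mem hmem]
                have hsetins : {u ∈ insert v A | G.Adj w u} = insert v {u ∈ A | G.Adj w u} := by
                  ext u
                  simp only [Set.mem_setOf_eq, Set.mem_insert_iff]
                  constructor
                  · rintro ⟨rfl | huA, hadju⟩
                    · exact Or.inl rfl
                    · exact Or.inr ⟨huA, hadju⟩
                  · rintro (rfl | ⟨huA, hadju⟩)
                    · exact ⟨Or.inl rfl, hadj.symm⟩
                    · exact ⟨Or.inr huA, hadju⟩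
                rw [hsetins, Set.ncard_insert_of_notMem (fun h => hvA h.1) (Set.toFinite _)]
                omega
              · have hnmem : s(v, w) ∉ dirtySet G A := by
                  intro h
                  exact hadj (G.mem_edgeSet.mp h.1)
                rw [Set.indicator_of_notMem hnmem]
                have hsetins : {u ∈ insert v A | G.Adj w u} = {u ∈ A | G.Adj w u} := by
                  ext u
                  simp only [Set.mem_setOf_eq, Set.mem_insert_iff]
                  constructor
                  · rintro ⟨rfl | huA, hadju⟩
                    · exact absurd hadju.symm hadj
                    · exact ⟨huA, hadju⟩
                  · rintro ⟨huA, hadju⟩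
                    exact ⟨Or.inr huA, hadju⟩
                rw [hsetins]
                simp
      have hA' : ∀ u w, u ∈ insert v A → κ w < κ u → w ∈ insert v A := by
        intro u w hu hlt
        rcases hu with rfl | huA
        · right
          by_contra hw
          exact absurd (hmin w hw) (by omega)
        · exact Or.inr (hA u w huA hlt)
      have hcard' : (insert v A)ᶜ.ncard ≤ n := by
        have h1 : (insert v A)ᶜ = Aᶜ \ {v} := by
          ext x; simp [Set.mem_insert_iff, and_comm]
        have h2 : (Aᶜ \ {v}).ncard = Aᶜ.ncard - 1 :=
          Set.ncard_diff_singleton_of_mem hvA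
        have h3 : 1 ≤ Aᶜ.ncard := by
          rw [Nat.one_le_iff_ne_zero, Ne, Set.ncard_eq_zero (Set.toFinite _)]
          intro h; rw [h] at hvA; exact hvA
        rw [h1, h2]
        omega
      obtain ⟨c', hc', hfin⟩ := ih (insert v A) hA' hcard'
      exact ⟨c', .head hstep hc', hfin⟩

lemma gen_cleans (κ : V → ℕ) (hκ : Function.Injective κ)
    (hω : ∀ v, {w | G.Adj v w ∧ κ v < κ w}.ncard
        ≤ ({w | G.Adj v w ∧ κ v < κ w}.ncard - {w | G.Adj v w ∧ κ w < κ v}.ncard)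
          + {w | G.Adj v w ∧ κ w < κ v}.ncard) :
    Cleans G false
      (fun v => {w | G.Adj v w ∧ κ v < κ w}.ncard - {w | G.Adj v w ∧ κ w < κ v}.ncard) := by
  set ω : V → ℕ :=
    fun v => {w | G.Adj v w ∧ κ v < κ w}.ncard - {w | G.Adj v w ∧ κ w < κ v}.ncard with hωdef
  obtain ⟨c', hc', hfin⟩ := conf_cleans G κ hκ ω (fun v => hω v)
      ((∅ : Set V)ᶜ.ncard) ∅ (by simp) le_rfl
  have hconf : conf G ω ∅ = ⟨∅, G.edgeSet, ω⟩ := by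
    have h1 : dirtySet G (∅ : Set V) = G.edgeSet := by
      ext e; simp [dirtySet]
    have h2 : beta G ω (∅ : Set V) = ω := by
      funext w
      simp [beta]
    rw [conf, h1, h2]
  exact ⟨c', by rwa [hconf] at hc', hfin⟩

end Gen


section Rec

open scoped Classical

variable (G : SimpleGraph V)

/-- forced edge of a record entry -/
def fe (x : Sym2 V × V × V) : Sym2 V := s(x.2.1, x.2.2)

/-- A valid sequence of zero-forcing moves on the line graph, in terms of `G` itself.
Entry `(e, p, q)`: the black edge `e` (containing the pivot `p`) forces the edge `s(p,q)`. -/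
inductive Rec : Set (Sym2 V) → List (Sym2 V × V × V) → Prop
  | nil : ∀ B, G.edgeSet ⊆ B → Rec B []
  | cons : ∀ B e p q L, e ∈ B → p ∈ e → s(p, q) ∈ G.edgeSet → s(p, q) ∉ B →
      (∀ g ∈ G.edgeSet, (∃ x, x ∈ e ∧ x ∈ g) → g ≠ s(p, q) → g ∈ B) →
      Rec (insert s(p, q) B) L → Rec B ((e, p, q) :: L)

lemma zfc_mono {W : Type*} (H : SimpleGraph W) {S S' : Set W} (hss : S ⊆ S') :
    ∀ v, ZFClosure H S v → ZFClosure H S' v := by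
  intro v h
  induction h with
  | init h => exact .init (hss h)
  | force _ hadj _ ih1 ih2 => exact .force ih1 hadj ih2

variable [Fintype V]

lemma exists_rec (S : Set G.edgeSet) (hS : IsZeroForcingSet G.lineGraph S) :
    ∃ L, Rec G (Subtype.val '' S) L := by
  suffices h : ∀ (n : ℕ) (T : Set G.edgeSet), (∀ v, ZFClosure G.lineGraph T v) →
      Tᶜ.ncard ≤ n → ∃ L, Rec G (Subtype.val '' T) L from h Sᶜ.ncard S hS le_rfl
  intro n
  induction n with
  | zero =>
    intro T _ hcard
    have hT : T = Set.univ := by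
      have : Tᶜ = ∅ := by
        rw [← Set.ncard_eq_zero (Set.toFinite _)]; omega
      simpa [Set.compl_empty_iff] using this
    refine ⟨[], Rec.nil _ ?_⟩
    rw [hT, Set.image_univ, Subtype.range_coe_subtype]
    exact fun g hg => hg
  | succ n ih =>
    intro T hT hcard
    by_cases hTu : T = Set.univ
    · refine ⟨[], Rec.nil _ ?_⟩
      rw [hTu, Set.image_univ, Subtype.range_coe_subtype]
      exact fun g hg => hg
    · -- there is an applicable force
      have happ : ∃ (e w : G.edgeSet), e ∈ T ∧ w ∉ T ∧ G.lineGraph.Adj e w ∧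
          (∀ u, G.lineGraph.Adj e u → u ≠ w → u ∈ T) := by
        by_contra hno
        push_neg at hno
        have hclosed : ∀ v, ZFClosure G.lineGraph T v → v ∈ T := by
          intro v hv
          induction hv with
          | init h => exact h
          | @force a b _ hadj _ ih1 ih2 =>
            by_contra hb
            obtain ⟨u, hu, hune, huT⟩ := hno a b ih1 hb hadj
            exact huT (ih2 u hu hune)
        obtain ⟨f₀, hf₀⟩ : Tᶜ.Nonempty := by rw [Set.nonempty_compl]; exact hTu
        exact hf₀ (hclosed f₀ (hT f₀))
      obtain ⟨e, w, heT, hwT, hadj, hfor⟩ := happ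
      obtain ⟨hne, x, hxe, hxw⟩ := (SimpleGraph.lineGraph_adj_iff_exists).mp hadj
      obtain ⟨y, hy⟩ := Sym2.mem_iff_exists.mp hxw
      have hwval : (w : Sym2 V) = s(x, y) := hy
      have hcard' : (insert w T)ᶜ.ncard ≤ n := by
        have h1 : (insert w T)ᶜ = Tᶜ \ {w} := by
          ext z; simp [Set.mem_insert_iff, and_comm]
        have h2 : (Tᶜ \ {w}).ncard = Tᶜ.ncard - 1 :=
          Set.ncard_diff_singleton_of_mem (show w ∈ Tᶜ from hwT)
        have h3 : 1 ≤ Tᶜ.ncard := by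
          rw [Nat.one_le_iff_ne_zero, Ne, Set.ncard_eq_zero (Set.toFinite _)]
          intro h
          have : w ∈ (∅ : Set G.edgeSet) := h ▸ hwT
          exact this
        rw [h1, h2]
        omega
      obtain ⟨L, hL⟩ := ih (insert w T)
        (fun v => zfc_mono _ (Set.subset_insert w T) v (hT v)) hcard'
      refine ⟨((e : Sym2 V), x, y) :: L, Rec.cons _ _ _ _ _ ⟨e, heT, rfl⟩ hxe ?_ ?_ ?_ ?_⟩
      · rw [← hwval]; exact w.2
      · rw [← hwval]
        rintro ⟨u, huT, huval⟩
        exact hwT (by rwa [Subtype.val_injective huval] at huT)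
      · intro g hg hshare hgne
        by_cases hge : g = (e : Sym2 V)
        · exact ⟨e, heT, hge.symm⟩
        · obtain ⟨z, hze, hzg⟩ := hshare
          have hadj' : G.lineGraph.Adj e ⟨g, hg⟩ := by
            rw [SimpleGraph.lineGraph_adj_iff_exists]
            exact ⟨fun hcontra => hge (congrArg Subtype.val hcontra).symm, z, hze, hzg⟩
          have hgw : (⟨g, hg⟩ : G.edgeSet) ≠ w := by
            intro hcontra
            exact hgne (by rw [← hwval, ← hcontra])
          exact ⟨⟨g, hg⟩, hfor _ hadj' hgw, rfl⟩
      · rw [← hwval, ← Set.image_insert_eq] at *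
        exact hL


def BtL (B : Set (Sym2 V)) (L : List (Sym2 V × V × V)) (d : Sym2 V × V × V) (t : ℕ) :
    Set (Sym2 V) := B ∪ {g | ∃ j, j < t ∧ fe (L.getD j d) = g}

lemma BtL_cons (B : Set (Sym2 V)) (e : Sym2 V) (p q : V) (L : List (Sym2 V × V × V))
    (d : Sym2 V × V × V) (i : ℕ) :
    BtL B ((e, p, q) :: L) d (i + 1) = BtL (insert s(p, q) B) L d i := by
  ext g
  simp only [BtL, Set.mem_union, Set.mem_setOf_eq, Set.mem_insert_iff]
  constructor
  · rintro (hB | ⟨j, hj, hfe⟩)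
    · exact Or.inl (Or.inr hB)
    · cases j with
      | zero => exact Or.inl (Or.inl (by simpa [fe] using hfe.symm))
      | succ j => exact Or.inr ⟨j, by omega, by simpa using hfe⟩
  · rintro ((rfl | hB) | ⟨j, hj, hfe⟩)
    · exact Or.inr ⟨0, by omega, by simp [fe]⟩
    · exact Or.inl hB
    · exact Or.inr ⟨j + 1, by omega, by simpa using hfe⟩

lemma rec_spec {B : Set (Sym2 V)} {L : List (Sym2 V × V × V)} (d : Sym2 V × V × V)
    (h : Rec G B L) :
    ∀ i, i < L.length →
      (L.getD i d).1 ∈ BtL B L d i ∧ (L.getD i d).2.1 ∈ (L.getD i d).1 ∧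
      fe (L.getD i d) ∈ G.edgeSet ∧ fe (L.getD i d) ∉ BtL B L d i ∧
      (∀ g ∈ G.edgeSet, (∃ x, x ∈ (L.getD i d).1 ∧ x ∈ g) → g ≠ fe (L.getD i d) →
        g ∈ BtL B L d i) := by
  induction h with
  | nil B _ => intro i hi; simp at hi
  | cons B e p q L he hp hf hfn hnb _ ih =>
    intro i hi
    cases i with
    | zero =>
      have hB0 : BtL B ((e, p, q) :: L) d 0 = B := by
        simp [BtL]
      simp only [List.getD_cons_zero, hB0]
      exact ⟨he, hp, hf, hfn, hnb⟩
    | succ i =>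
      have := ih i (by simpa using hi)
      simpa [BtL_cons, List.getD_cons_succ] using this

lemma rec_total {B : Set (Sym2 V)} {L : List (Sym2 V × V × V)} (d : Sym2 V × V × V)
    (h : Rec G B L) : G.edgeSet ⊆ BtL B L d L.length := by
  induction h with
  | nil B hB => exact fun g hg => Or.inl (hB hg)
  | cons B e p q L he hp hf hfn hnb _ ih =>
    intro g hg
    rw [List.length_cons, BtL_cons]
    exact ih hg

variable [Fintype V]

lemma counting [Nonempty V] (B₀ : Set (Sym2 V)) (hB₀ : B₀ ⊆ G.edgeSet)
    (L : List (Sym2 V × V × V)) (hL : Rec G B₀ L) :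
    ∃ κ : V → ℕ, Function.Injective κ ∧
      ∑ᶠ v, ({w | G.Adj v w ∧ κ v < κ w}.ncard - {w | G.Adj v w ∧ κ w < κ v}.ncard)
        ≤ B₀.ncard := by
  classical
  obtain ⟨v₀⟩ := (inferInstance : Nonempty V)
  set d : Sym2 V × V × V := (s(v₀, v₀), v₀, v₀) with hd
  set m := L.length with hm
  have spec := rec_spec G d hL
  have total := rec_total G d hL
  set Bt : ℕ → Set (Sym2 V) := fun t => BtL B₀ L d t with hBt
  set Pv : ℕ → V := fun i => (L.getD i d).2.1 with hPv
  set Qv : ℕ → V := fun i => (L.getD i d).2.2 with hQv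
  set Ev : ℕ → Sym2 V := fun i => (L.getD i d).1 with hEv
  have hFi : ∀ i, fe (L.getD i d) = s(Pv i, Qv i) := fun i => rfl
  have spec1 : ∀ i, i < m → Ev i ∈ Bt i := fun i hi => (spec i hi).1
  have spec2 : ∀ i, i < m → Pv i ∈ Ev i := fun i hi => (spec i hi).2.1
  have spec3 : ∀ i, i < m → s(Pv i, Qv i) ∈ G.edgeSet := fun i hi => by
    have := (spec i hi).2.2.1; rwa [hFi] at this
  have spec4 : ∀ i, i < m → s(Pv i, Qv i) ∉ Bt i := fun i hi => by
    have := (spec i hi).2.2.2.1; rwa [hFi] at this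
  have spec5 : ∀ i, i < m → ∀ g ∈ G.edgeSet, (∃ x, x ∈ Ev i ∧ x ∈ g) →
      g ≠ s(Pv i, Qv i) → g ∈ Bt i := fun i hi => by
    have := (spec i hi).2.2.2.2; rwa [hFi] at this
  have hBtmono : ∀ {t t' : ℕ}, t ≤ t' → Bt t ⊆ Bt t' := by
    intro t t' htt g hg
    rcases hg with hg | ⟨j, hj, hfe⟩
    · exact Or.inl hg
    · exact Or.inr ⟨j, by omega, hfe⟩
  have hFimem : ∀ i, i < m → s(Pv i, Qv i) ∈ Bt (i + 1) := by
    intro i _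
    exact Or.inr ⟨i, by omega, hFi i⟩
  have hBtedge : ∀ t, t ≤ m → ∀ g ∈ Bt t, g ∈ G.edgeSet := by
    intro t ht g hg
    rcases hg with hg | ⟨j, hj, hfe⟩
    · exact hB₀ hg
    · rw [← hfe, hFi]; exact spec3 j (by omega)
  have hexists : ∀ v : V, ∃ t, ∀ g ∈ G.edgeSet, v ∈ g → g ∈ Bt t :=
    fun v => ⟨m, fun g hg _ => total hg⟩
  set T : V → ℕ := fun v => Nat.find (hexists v) with hT
  have hTspec : ∀ v, ∀ g ∈ G.edgeSet, v ∈ g → g ∈ Bt (T v) := fun v => Nat.find_spec (hexists v)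
  have hTle : ∀ v t, (∀ g ∈ G.edgeSet, v ∈ g → g ∈ Bt t) → T v ≤ t :=
    fun v t h => Nat.find_le h
  have hTgt : ∀ v t g, g ∈ G.edgeSet → v ∈ g → g ∉ Bt t → t < T v := by
    intro v t g hg hvg hgB
    by_contra hle
    push_neg at hle
    exact hgB (hBtmono hle (hTspec v g hg hvg))
  have edges_pivot : ∀ i, i < m → ∀ g ∈ G.edgeSet, Pv i ∈ g → g ∈ Bt (i + 1) := by
    intro i hi g hg hpg
    by_cases hgf : g = s(Pv i, Qv i)
    · rw [hgf]; exact hFimem i hi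
    · exact hBtmono (Nat.le_succ i) (spec5 i hi g hg ⟨Pv i, spec2 i hi, hpg⟩ hgf)
  have hPF : ∀ i, Pv i ∈ s(Pv i, Qv i) := fun i => Sym2.mem_mk_left _ _
  have hQF : ∀ i, Qv i ∈ s(Pv i, Qv i) := fun i => Sym2.mem_mk_right _ _
  have hTP : ∀ i, i < m → T (Pv i) = i + 1 := by
    intro i hi
    have h1 : T (Pv i) ≤ i + 1 := hTle _ _ (edges_pivot i hi)
    have h2 : i < T (Pv i) := hTgt _ _ _ (spec3 i hi) (hPF i) (spec4 i hi)
    omega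
  have hTQ : ∀ i, i < m → i < T (Qv i) := fun i hi =>
    hTgt _ _ _ (spec3 i hi) (hQF i) (spec4 i hi)
  have hPQne : ∀ i, i < m → Pv i ≠ Qv i := fun i hi =>
    G.ne_of_adj (G.mem_edgeSet.mp (spec3 i hi))
  have hPinj : ∀ i j, i < m → j < m → Pv i = Pv j → i = j := by
    intro i j hi hj hP
    have h1 := hTP i hi
    have h2 := hTP j hj
    rw [hP] at h1
    omega
  set pb : V → ℕ := fun v => if ∃ i, i < m ∧ Pv i = v then 0 else 1 with hpb
  have hpb1 : ∀ v, pb v ≤ 1 := by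
    intro v
    by_cases h : ∃ i, i < m ∧ Pv i = v <;> simp [hpb, h]
  set n : ℕ := Fintype.card V with hn
  set ι : V → ℕ := fun v => ((Fintype.equivFin V) v : ℕ) with hι
  have hιlt : ∀ v, ι v < n := fun v => (Fintype.equivFin V v).2
  have hιinj : Function.Injective ι := by
    intro a b h
    exact (Fintype.equivFin V).injective (Fin.ext h)
  set κ : V → ℕ := fun v => (2 * T v + pb v) * n + ι v with hκ
  have hκlt : ∀ v w, 2 * T v + pb v < 2 * T w + pb w → κ v < κ w := by
    intro v w h
    have c1 : κ v < (2 * T v + pb v + 1) * n := by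
      simp only [hκ]
      calc (2 * T v + pb v) * n + ι v < (2 * T v + pb v) * n + n :=
            Nat.add_lt_add_left (hιlt v) _
        _ = (2 * T v + pb v + 1) * n := by ring
    have c2 : (2 * T v + pb v + 1) * n ≤ (2 * T w + pb w) * n :=
      Nat.mul_le_mul_right n (by omega)
    have c3 : (2 * T w + pb w) * n ≤ κ w := by
      simp only [hκ]
      exact Nat.le_add_right _ _
    omega
  have hκinj : Function.Injective κ := by
    intro a b h
    have key : ∀ v, κ v % n = ι v := by
      intro v
      simp only [hκ]
      rw [Nat.add_comm, Nat.add_mul_mod_self_right, Nat.mod_eq_of_lt (hιlt v)]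
    have : ι a = ι b := by rw [← key a, ← key b, h]
    exact hιinj this
  have hκT : ∀ v w, T v < T w → κ v < κ w := by
    intro v w h
    have h1 := hpb1 v
    have h2 := hpb1 w
    exact hκlt v w (by omega)
  have hPQκ : ∀ i, i < m → κ (Pv i) < κ (Qv i) := by
    intro i hi
    have hTPi := hTP i hi
    have hTQi := hTQ i hi
    rcases Nat.lt_or_ge (i + 1) (T (Qv i)) with hlt | hge
    · exact hκT _ _ (by omega)
    · have hTQe : T (Qv i) = i + 1 := by omega
      have hpbP : pb (Pv i) = 0 := by
        have hex : ∃ j, j < m ∧ Pv j = Pv i := ⟨i, hi, rfl⟩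
        simp [hpb, hex]
      have hpbQ : pb (Qv i) = 1 := by
        have hno : ¬ ∃ j, j < m ∧ Pv j = Qv i := by
          rintro ⟨j, hj, hPj⟩
          have hTj := hTP j hj
          rw [hPj] at hTj
          have hji : j = i := by omega
          subst hji
          exact hPQne j hj hPj
        simp [hpb, hno]
      exact hκlt _ _ (by omega)
  have hforcer : ∀ i, i < m → ∃ x, G.Adj (Pv i) x ∧ κ x < κ (Pv i) := by
    intro i hi
    have hEedge : Ev i ∈ G.edgeSet := hBtedge i (le_of_lt hi) _ (spec1 i hi)
    obtain ⟨x, hEx⟩ := Sym2.mem_iff_exists.mp (spec2 i hi)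
    have hadj : G.Adj (Pv i) x := G.mem_edgeSet.mp (hEx ▸ hEedge)
    have hxQ : x ≠ Qv i := by
      rintro rfl
      exact spec4 i hi (hEx ▸ spec1 i hi)
    have hxP : x ≠ Pv i := fun h => (G.ne_of_adj hadj) h.symm
    have hprop : ∀ g ∈ G.edgeSet, x ∈ g → g ∈ Bt i := by
      intro g hg hxg
      have hgne : g ≠ s(Pv i, Qv i) := by
        rintro rfl
        rcases Sym2.mem_iff.mp hxg with h | h
        · exact hxP h
        · exact hxQ h
      refine spec5 i hi g hg ⟨x, ?_, hxg⟩ hgne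
      rw [hEx]
      exact Sym2.mem_mk_right _ _
    have hTx : T x ≤ i := hTle _ _ hprop
    have hTlt : T x < T (Pv i) := by rw [hTP i hi]; omega
    exact ⟨x, hadj, hκT _ _ hTlt⟩
  have main : ∀ v, {w | G.Adj v w ∧ κ v < κ w}.ncard - {w | G.Adj v w ∧ κ w < κ v}.ncard
      ≤ {w | G.Adj v w ∧ κ v < κ w ∧ s(v, w) ∈ B₀}.ncard := by
    intro v
    set Dp := {w | G.Adj v w ∧ κ v < κ w} with hDp
    set Dm := {w | G.Adj v w ∧ κ w < κ v} with hDm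
    set Tk := {w | G.Adj v w ∧ κ v < κ w ∧ s(v, w) ∈ B₀} with hTk
    have hrest : ∀ w ∈ Dp \ Tk, ∃ i, i < m ∧ v = Pv i ∧ w = Qv i := by
      intro w hw
      obtain ⟨⟨hadj, hκvw⟩, hnTk⟩ := hw
      have hnB₀ : s(v, w) ∉ B₀ := fun hB => hnTk ⟨hadj, hκvw, hB⟩
      have hedge : s(v, w) ∈ G.edgeSet := G.mem_edgeSet.mpr hadj
      rcases total hedge with hB | ⟨j, hj, hfe⟩
      · exact absurd hB hnB₀
      · rw [hFi] at hfe
        rcases Sym2.eq_iff.mp hfe with ⟨h1, h2⟩ | ⟨h1, h2⟩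
        · exact ⟨j, by omega, h1.symm, h2.symm⟩
        · exfalso
          have := hPQκ j (by omega)
          rw [h1, h2] at this
          omega
    rcases Set.eq_empty_or_nonempty (Dp \ Tk) with hem | ⟨w, hw⟩
    · have hsc : Dp ⊆ Tk := by
        intro y hy
        by_contra hny
        have : y ∈ Dp \ Tk := ⟨hy, hny⟩
        rw [hem] at this
        exact this
      have := Set.ncard_le_ncard hsc (Set.toFinite _)
      omega
    · obtain ⟨i, hi, hv, hwq⟩ := hrest w hw
      obtain ⟨x, hxadj, hxκ⟩ := hforcer i hi
      have hDm1 : 1 ≤ Dm.ncard := by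
        rw [Nat.one_le_iff_ne_zero, Ne, Set.ncard_eq_zero (Set.toFinite _)]
        intro hDmem
        have hxmem : x ∈ Dm := ⟨by rw [hv]; exact hxadj, by rw [hv]; exact hxκ⟩
        rw [hDmem] at hxmem
        exact hxmem
      have hsub : Dp \ Tk ⊆ {w} := by
        intro y hy
        obtain ⟨i', hi', hv', hy'⟩ := hrest y hy
        have hii : i' = i := hPinj i' i hi' hi (by rw [← hv', ← hv])
        subst hii
        rw [Set.mem_singleton_iff, hy', hwq]
      have hle1 : (Dp \ Tk).ncard ≤ 1 := by
        have := Set.ncard_le_ncard hsub (Set.toFinite _)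
        simpa using this
      have hDpsplit : Dp.ncard ≤ Tk.ncard + (Dp \ Tk).ncard := by
        have hcover : Dp ⊆ Tk ∪ (Dp \ Tk) := by
          intro y hy
          by_cases h : y ∈ Tk
          · exact Or.inl h
          · exact Or.inr ⟨hy, h⟩
        exact le_trans (Set.ncard_le_ncard hcover (Set.toFinite _)) (Set.ncard_union_le _ _)
      omega
  refine ⟨κ, hκinj, ?_⟩
  rw [finsum_eq_sum_of_fintype]
  have step1 : ∑ v, ({w | G.Adj v w ∧ κ v < κ w}.ncard - {w | G.Adj v w ∧ κ w < κ v}.ncard)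
      ≤ ∑ v, {w | G.Adj v w ∧ κ v < κ w ∧ s(v, w) ∈ B₀}.ncard :=
    Finset.sum_le_sum (fun v _ => main v)
  have step2 : ∑ v : V, {w | G.Adj v w ∧ κ v < κ w ∧ s(v, w) ∈ B₀}.ncard ≤ B₀.ncard := by
    set tokF : V → Finset V :=
      fun v => (Set.toFinite {w | G.Adj v w ∧ κ v < κ w ∧ s(v, w) ∈ B₀}).toFinset with htokF
    have hcardeq : ∀ v, {w | G.Adj v w ∧ κ v < κ w ∧ s(v, w) ∈ B₀}.ncard = (tokF v).card :=
      fun v => Set.ncard_eq_toFinset_card _ _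
    set tokE : V → Finset (Sym2 V) := fun v => (tokF v).image (fun w => s(v, w)) with htokE
    have hcardE : ∀ v, (tokE v).card = (tokF v).card := fun v =>
      Finset.card_image_of_injective _ (fun a b h => Sym2.congr_right.mp h)
    have hdisj : ∀ v ∈ Finset.univ, ∀ v' ∈ Finset.univ, v ≠ v' → Disjoint (tokE v) (tokE v') := by
      intro v _ v' _ hne
      rw [Finset.disjoint_left]
      intro e he he'
      simp only [htokE, Finset.mem_image] at he he'
      obtain ⟨w, hw, rfl⟩ := he
      obtain ⟨w', hw', heq⟩ := he'
      rw [Set.Finite.mem_toFinset] at hw hw'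
      rcases Sym2.eq_iff.mp heq with ⟨h1, h2⟩ | ⟨h1, h2⟩
      · exact hne (h1.symm)
      · have k1 := hw.2.1
        have k2 := hw'.2.1
        rw [h1, h2] at k2
        omega
    have hunion : ∑ v, (tokE v).card = (Finset.univ.biUnion tokE).card :=
      (Finset.card_biUnion hdisj).symm
    have hsubB : Finset.univ.biUnion tokE ⊆ (Set.toFinite B₀).toFinset := by
      intro e he
      rw [Finset.mem_biUnion] at he
      obtain ⟨v, _, hev⟩ := he
      simp only [htokE, Finset.mem_image] at hev
      obtain ⟨w, hw, rfl⟩ := hev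
      rw [Set.Finite.mem_toFinset] at hw
      rw [Set.Finite.mem_toFinset]
      exact hw.2.2
    calc ∑ v : V, {w | G.Adj v w ∧ κ v < κ w ∧ s(v, w) ∈ B₀}.ncard
        = ∑ v, (tokE v).card := by
          refine Finset.sum_congr rfl (fun v _ => ?_)
          rw [hcardeq v, hcardE v]
      _ = (Finset.univ.biUnion tokE).card := hunion
      _ ≤ (Set.toFinite B₀).toFinset.card := Finset.card_le_card hsubB
      _ = B₀.ncard := (Set.ncard_eq_toFinset_card _ _).symm
  omega

end Rec


theorem brushNumber_le_zfNumber_lineGraph_add_isolated {V : Type*} [Fintype V]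
    (G : SimpleGraph V) (k : ℕ) (hk : {v : V | ∀ w, ¬ G.Adj v w}.ncard = k) :
    brushNumber G ≤ zfNumber G.lineGraph + k := by
  classical
  rcases isEmpty_or_nonempty V with hV | hV
  · have hcl : Cleans G false (fun _ => 0) := by
      refine ⟨⟨∅, G.edgeSet, fun _ => 0⟩, .refl, ?_⟩
      exact (Set.eq_empty_of_isEmpty Set.univ).symm
    have h0 : (0 : ℕ) ∈ {n | ∃ ω : V → ℕ, Cleans G false ω ∧ ∑ᶠ v, ω v = n} :=
      ⟨fun _ => 0, hcl, by simp⟩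
    exact le_trans (Nat.sInf_le h0) (Nat.zero_le _)
  · have hne : {n | ∃ S : Set ↥G.edgeSet, IsZeroForcingSet G.lineGraph S ∧ S.ncard = n}.Nonempty :=
      ⟨(Set.univ : Set ↥G.edgeSet).ncard, Set.univ,
        fun v => ZFClosure.init (Set.mem_univ v), rfl⟩
    obtain ⟨S, hS, hSc⟩ := Nat.sInf_mem hne
    set B₀ : Set (Sym2 V) := Subtype.val '' S with hB₀
    have hB₀sub : B₀ ⊆ G.edgeSet := by
      rintro g ⟨e, _, rfl⟩
      exact e.2
    have hB₀card : B₀.ncard = S.ncard :=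
      Set.ncard_image_of_injective _ Subtype.val_injective
    obtain ⟨L, hL⟩ := exists_rec G S hS
    obtain ⟨κ, hκinj, hκsum⟩ := counting G B₀ hB₀sub L hL
    have hcl : Cleans G false
        (fun v => {w | G.Adj v w ∧ κ v < κ w}.ncard - {w | G.Adj v w ∧ κ w < κ v}.ncard) :=
      gen_cleans G κ hκinj (fun v => by omega)
    have hmem : (∑ᶠ v, ({w | G.Adj v w ∧ κ v < κ w}.ncard
        - {w | G.Adj v w ∧ κ w < κ v}.ncard))
        ∈ {n | ∃ ω : V → ℕ, Cleans G false ω ∧ ∑ᶠ v, ω v = n} := ⟨_, hcl, rfl⟩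
    calc brushNumber G ≤ _ := Nat.sInf_le hmem
      _ ≤ B₀.ncard := hκsum
      _ = S.ncard := hB₀card
      _ = zfNumber G.lineGraph := hSc
      _ ≤ zfNumber G.lineGraph + k := Nat.le_add_right _ _


end Paper
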